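/- Let X be a locally compact, σ-compact metrizable topological space (so that its one-point compactification X' = X ∪ {p} is a compact metrizable space), and let φ be an action of a group G on X. Let φ' be the extension of φ to X' defined by g·p = p for all g ∈ G. Then φ is metric-independent expansive (MIE) if and only if φ' is expansive with respect to some (equivalently, every) metric compatible with the topology of X'. -/

import Mathlib

/-- An action `φ` is expansive with respect to a distance function `d`. -/
def ExpansiveWith {G X : Type*} (φ : G → X → X) (d : X → X → ℝ) : Prop :=
  ∃ c > 0, ∀ x y : X, x ≠ y → ∃ g : G, c < d (φ g x) (φ g y)

/-- Metric-independent expansiveness: expansive with respect to every metric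
compatible with the topology. -/
def MIE {G X : Type*} [tX : TopologicalSpace X] (φ : G → X → X) : Prop :=
  ∀ m : MetricSpace X, m.toUniformSpace.toTopologicalSpace = tX →
    ExpansiveWith φ (fun x y => @dist X m.toDist x y)

/-- The extension of an action to the one-point compactification, fixing the point
at infinity. -/
def onePointExt {G X : Type*} (φ : G → X → X) (g : G) : OnePoint X → OnePoint X :=
  Option.map (φ g)

open Set Metric TopologicalSpace OnePoint

lemma onePointExt_coe {G X : Type*} (φ : G → X → X) (g : G) (x : X) :
    onePointExt φ g ↑x = ↑(φ g x) := rfl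

lemma onePointExt_infty {G X : Type*} (φ : G → X → X) (g : G) :
    onePointExt φ g ∞ = ∞ := rfl

/-- The one-point compactification of a second-countable, locally compact,
σ-compact Hausdorff space is second countable. -/
lemma secondCountable_onePoint {X : Type*} [TopologicalSpace X]
    [MetrizableSpace X] [LocallyCompactSpace X] [SigmaCompactSpace X] :
    SecondCountableTopology (OnePoint X) := by
  haveI : SecondCountableTopology X := by
    letI := metrizableSpaceMetric X
    infer_instance
  obtain ⟨b, hbc, -, hb⟩ := exists_countable_basis X
  let K := CompactExhaustion.choice X
  let S : Set (Set (OnePoint X)) :=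
    ((fun s : Set X => ((↑) : X → OnePoint X) '' s) '' b) ∪
      (Set.range fun n => (((↑) : X → OnePoint X) '' (K n))ᶜ)
  have hS : IsTopologicalBasis S := by
    refine isTopologicalBasis_of_isOpen_of_nhds ?_ ?_
    · rintro u (⟨s, hs, rfl⟩ | ⟨n, rfl⟩)
      · exact isOpen_image_coe.2 (hb.isOpen hs)
      · exact isOpen_compl_image_coe.2 ⟨(K.isCompact n).isClosed, K.isCompact n⟩
    · intro z u hzu hu
      cases z with
      | infty =>
        have h1 : IsCompact (((↑) : X → OnePoint X) ⁻¹' u)ᶜ ∧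
            IsOpen (((↑) : X → OnePoint X) ⁻¹' u) := (isOpen_iff_of_mem' hzu).1 hu
        obtain ⟨n, hn⟩ := K.exists_superset_of_isCompact h1.1
        refine ⟨(((↑) : X → OnePoint X) '' (K n))ᶜ, Or.inr ⟨n, rfl⟩,
          infty_notMem_image_coe, ?_⟩
        intro w hw
        cases w with
        | infty => exact hzu
        | coe y =>
          have hy : y ∉ K n := fun hyK => hw (mem_image_of_mem _ hyK)
          have : y ∉ (((↑) : X → OnePoint X) ⁻¹' u)ᶜ := fun hyc => hy (hn hyc)
          simpa using not_not.1 this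
      | coe x =>
        have hpre : IsOpen (((↑) : X → OnePoint X) ⁻¹' u) :=
          hu.preimage isOpenEmbedding_coe.continuous
        obtain ⟨s, hsb, hxs, hsu⟩ := hb.exists_subset_of_mem_open (by exact hzu) hpre
        refine ⟨((↑) : X → OnePoint X) '' s, Or.inl ⟨s, hsb, rfl⟩,
          mem_image_of_mem _ hxs, ?_⟩
        rintro w ⟨y, hy, rfl⟩
        exact hsu hy
  exact hS.secondCountableTopology
    ((hbc.image _).union (countable_range _))

/-- The one-point compactification of a metrizable, locally compact,
σ-compact space is metrizable. -/
lemma metrizable_onePoint {X : Type*} [TopologicalSpace X]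
    [MetrizableSpace X] [LocallyCompactSpace X] [SigmaCompactSpace X] :
    MetrizableSpace (OnePoint X) := by
  haveI := secondCountable_onePoint (X := X)
  haveI : T4Space (OnePoint X) := inferInstance
  infer_instance

/-- If `φ` is MIE, then its extension to the one-point compactification is
expansive with respect to every compatible metric. -/
lemma mie_to_onePoint {G X : Type*} [Group G] [tX : TopologicalSpace X]
    (φ : G → X → X) (hone : ∀ x : X, φ 1 x = x) (hMIE : MIE φ)
    (m' : MetricSpace (OnePoint X))
    (hm' : m'.toUniformSpace.toTopologicalSpace
      = (inferInstance : TopologicalSpace (OnePoint X))) :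
    ExpansiveWith (onePointExt φ) (fun a b => @dist (OnePoint X) m'.toDist a b) := by
  classical
  set d' : OnePoint X → OnePoint X → ℝ := fun a b => @dist (OnePoint X) m'.toDist a b with hd'
  have tri : ∀ a b c : OnePoint X, d' a c ≤ d' a b + d' b c := fun a b c =>
    @dist_triangle _ m'.toPseudoMetricSpace a b c
  have symm' : ∀ a b : OnePoint X, d' a b = d' b a := fun a b =>
    @dist_comm _ m'.toPseudoMetricSpace a b
  have pos' : ∀ a b : OnePoint X, a ≠ b → 0 < d' a b := fun a b h =>
    (@dist_pos _ m' a b).2 h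
  -- the metric on `X` induced by `m'` via the coercion
  let m : MetricSpace X := MetricSpace.induced ((↑) : X → OnePoint X) OnePoint.coe_injective m'
  have hm : m.toUniformSpace.toTopologicalSpace = tX := by
    have h1 : m.toUniformSpace
        = UniformSpace.comap ((↑) : X → OnePoint X) m'.toUniformSpace := rfl
    rw [h1, UniformSpace.toTopologicalSpace_comap, hm']
    exact isOpenEmbedding_coe.isInducing.eq_induced.symm
  obtain ⟨c, hc, hexp⟩ := hMIE m hm
  have hdm : ∀ x y : X, @dist X m.toDist x y = d' ↑x ↑y := fun _ _ => rfl
  by_cases hA : ∃ x : X, ∀ g : G, d' ↑(φ g x) ∞ ≤ c / 3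
  · obtain ⟨x₀, hx₀⟩ := hA
    have hx₀pos : 0 < d' ↑x₀ ∞ := pos' _ _ (OnePoint.coe_ne_infty x₀)
    refine ⟨min (c / 3) (d' ↑x₀ ∞ / 2), lt_min (by linarith) (by linarith), ?_⟩
    intro a b hab
    -- helper for the (coe, infty) case
    have coe_infty : ∀ x : X, ∃ g : G,
        min (c / 3) (d' ↑x₀ ∞ / 2) < d' ↑(φ g x) ∞ := by
      intro x
      by_cases hx : ∀ g : G, d' ↑(φ g x) ∞ ≤ c / 3
      · by_cases hxx : x = x₀
        · refine ⟨1, ?_⟩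
          rw [hxx, hone x₀]
          exact lt_of_le_of_lt (min_le_right _ _) (by linarith)
        · exfalso
          obtain ⟨g, hg⟩ := hexp x x₀ hxx
          have hg' : c < d' ↑(φ g x) ↑(φ g x₀) := hg
          have h1 := hx g
          have h2 := hx₀ g
          have h3 := tri (↑(φ g x)) ∞ (↑(φ g x₀))
          have h4 := symm' ∞ (↑(φ g x₀))
          linarith
      · push_neg at hx
        obtain ⟨g, hg⟩ := hx
        exact ⟨g, lt_of_le_of_lt (min_le_left _ _) hg⟩
    cases a with
    | infty =>
      cases b with
      | infty => exact absurd rfl hab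
      | coe y =>
        obtain ⟨g, hg⟩ := coe_infty y
        refine ⟨g, ?_⟩
        rw [onePointExt_infty, onePointExt_coe]
        calc min (c / 3) (d' ↑x₀ ∞ / 2) < d' ↑(φ g y) ∞ := hg
        _ = d' ∞ ↑(φ g y) := symm' _ _
    | coe x =>
      cases b with
      | infty =>
        obtain ⟨g, hg⟩ := coe_infty x
        exact ⟨g, by rw [onePointExt_infty, onePointExt_coe]; exact hg⟩
      | coe y =>
        have hxy : x ≠ y := fun h => hab (by rw [h])
        obtain ⟨g, hg⟩ := hexp x y hxy
        have hg' : c < d' ↑(φ g x) ↑(φ g y) := hg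
        refine ⟨g, ?_⟩
        rw [onePointExt_coe, onePointExt_coe]
        exact lt_of_le_of_lt (min_le_left _ _) (by linarith)
  · push_neg at hA
    refine ⟨c / 3, by linarith, ?_⟩
    intro a b hab
    cases a with
    | infty =>
      cases b with
      | infty => exact absurd rfl hab
      | coe y =>
        obtain ⟨g, hg⟩ := hA y
        refine ⟨g, ?_⟩
        rw [onePointExt_infty, onePointExt_coe]
        calc c / 3 < d' ↑(φ g y) ∞ := hg
        _ = d' ∞ ↑(φ g y) := symm' _ _
    | coe x =>
      cases b with
      | infty =>
        obtain ⟨g, hg⟩ := hA x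
        exact ⟨g, by rw [onePointExt_infty, onePointExt_coe]; exact hg⟩
      | coe y =>
        have hxy : x ≠ y := fun h => hab (by rw [h])
        obtain ⟨g, hg⟩ := hexp x y hxy
        have hg' : c < d' ↑(φ g x) ↑(φ g y) := hg
        refine ⟨g, ?_⟩
        rw [onePointExt_coe, onePointExt_coe]
        linarith

/-- If the extension of `φ` to the one-point compactification is expansive with
respect to some compatible metric, then `φ` is MIE. -/
lemma onePoint_to_mie {G X : Type*} [tX : TopologicalSpace X] [T2Space X]
    [LocallyCompactSpace X] (φ : G → X → X)
    (m' : MetricSpace (OnePoint X))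
    (hm' : m'.toUniformSpace.toTopologicalSpace
      = (inferInstance : TopologicalSpace (OnePoint X)))
    (hE : ExpansiveWith (onePointExt φ) (fun a b => @dist (OnePoint X) m'.toDist a b)) :
    MIE φ := by
  classical
  obtain ⟨c', hc', hexp'⟩ := hE
  intro m hm
  subst hm
  set d' : OnePoint X → OnePoint X → ℝ := fun a b => @dist (OnePoint X) m'.toDist a b with hd'
  set d : X → X → ℝ := fun x y => @dist X m.toDist x y with hd
  -- the set of pairs at `d'`-distance at least `c'`
  set B : Set (OnePoint X × OnePoint X) := {p | c' ≤ d' p.1 p.2} with hBdef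
  have hcont : Continuous fun p : OnePoint X × OnePoint X => d' p.1 p.2 := by
    have h0 : @Continuous _ _
        (@instTopologicalSpaceProd _ _ m'.toUniformSpace.toTopologicalSpace
          m'.toUniformSpace.toTopologicalSpace) _
        (fun p : OnePoint X × OnePoint X => d' p.1 p.2) :=
      @continuous_dist _ m'.toPseudoMetricSpace
    rw [hm'] at h0
    exact h0
  have hB : IsCompact B := (isClosed_le continuous_const hcont).isCompact
  -- around each point of `B` there is an open box on which `d` is bounded below
  have key : ∀ p : OnePoint X × OnePoint X, p ∈ B →
      ∃ (W : Set (OnePoint X × OnePoint X)) (r : ℝ), IsOpen W ∧ p ∈ W ∧ 0 < r ∧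
        ∀ x y : X, ((x : OnePoint X), (y : OnePoint X)) ∈ W → r ≤ d x y := by
    rintro ⟨a, b⟩ hp
    have hab : a ≠ b := by
      intro h
      have : d' a b = 0 := by rw [h]; exact @dist_self _ m'.toPseudoMetricSpace b
      have hle : c' ≤ d' a b := hp
      rw [this] at hle
      linarith
    cases a with
    | infty =>
      cases b with
      | infty => exact absurd rfl hab
      | coe y₀ =>
        obtain ⟨K, hKc, hKn⟩ := exists_compact_mem_nhds y₀
        rw [@Metric.mem_nhds_iff X m.toPseudoMetricSpace] at hKn
        obtain ⟨ε, hε, hball⟩ := hKn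
        refine ⟨((((↑) : X → OnePoint X) '' K)ᶜ) ×ˢ
            (((↑) : X → OnePoint X) '' @Metric.ball X m.toPseudoMetricSpace y₀ (ε / 3)),
          ε / 3, ?_, ?_, by linarith, ?_⟩
        · exact (isOpen_compl_image_coe.2 ⟨hKc.isClosed, hKc⟩).prod
            (isOpen_image_coe.2 (@Metric.isOpen_ball X m.toPseudoMetricSpace y₀ (ε / 3)))
        · exact ⟨infty_notMem_image_coe,
            mem_image_of_mem _ (@Metric.mem_ball_self X m.toPseudoMetricSpace y₀ _ (by linarith))⟩
        · rintro x y ⟨hx, hy⟩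
          have hxK : x ∉ K := fun hxK => hx (mem_image_of_mem _ hxK)
          obtain ⟨y', hy', hyy⟩ := hy
          have hy2 : @dist X m.toDist y y₀ < ε / 3 := by
            rw [← OnePoint.coe_eq_coe.1 hyy]
            exact (@Metric.mem_ball X m.toPseudoMetricSpace _ _ _).1 hy'
          by_contra hcon
          push_neg at hcon
          apply hxK
          apply hball
          rw [@Metric.mem_ball X m.toPseudoMetricSpace]
          have t1 : @dist X m.toDist x y₀ ≤ @dist X m.toDist x y + @dist X m.toDist y y₀ :=
            @dist_triangle X m.toPseudoMetricSpace x y y₀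
          have t2 : @dist X m.toDist x y = d x y := rfl
          linarith
    | coe x₀ =>
      cases b with
      | infty =>
        obtain ⟨K, hKc, hKn⟩ := exists_compact_mem_nhds x₀
        rw [@Metric.mem_nhds_iff X m.toPseudoMetricSpace] at hKn
        obtain ⟨ε, hε, hball⟩ := hKn
        refine ⟨(((↑) : X → OnePoint X) '' @Metric.ball X m.toPseudoMetricSpace x₀ (ε / 3)) ×ˢ
            ((((↑) : X → OnePoint X) '' K)ᶜ),
          ε / 3, ?_, ?_, by linarith, ?_⟩
        · exact (isOpen_image_coe.2 (@Metric.isOpen_ball X m.toPseudoMetricSpace x₀ (ε / 3))).prod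
            (isOpen_compl_image_coe.2 ⟨hKc.isClosed, hKc⟩)
        · exact ⟨mem_image_of_mem _
              (@Metric.mem_ball_self X m.toPseudoMetricSpace x₀ _ (by linarith)),
            infty_notMem_image_coe⟩
        · rintro x y ⟨hx, hy⟩
          have hyK : y ∉ K := fun hyK => hy (mem_image_of_mem _ hyK)
          obtain ⟨x', hx', hxx⟩ := hx
          have hx2 : @dist X m.toDist x x₀ < ε / 3 := by
            rw [← OnePoint.coe_eq_coe.1 hxx]
            exact (@Metric.mem_ball X m.toPseudoMetricSpace _ _ _).1 hx'
          by_contra hcon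
          push_neg at hcon
          apply hyK
          apply hball
          rw [@Metric.mem_ball X m.toPseudoMetricSpace]
          have t1 : @dist X m.toDist y x₀ ≤ @dist X m.toDist y x + @dist X m.toDist x x₀ :=
            @dist_triangle X m.toPseudoMetricSpace y x x₀
          have t2 : @dist X m.toDist y x = d x y := @dist_comm X m.toPseudoMetricSpace x y ▸ rfl
          have t3 : @dist X m.toDist y x = @dist X m.toDist x y :=
            @dist_comm X m.toPseudoMetricSpace y x
          linarith
      | coe y₀ =>
        have hne : x₀ ≠ y₀ := fun h => hab (by rw [h])
        have hdp : 0 < d x₀ y₀ := (@dist_pos X m x₀ y₀).2 hne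
        refine ⟨(((↑) : X → OnePoint X) ''
              @Metric.ball X m.toPseudoMetricSpace x₀ (d x₀ y₀ / 3)) ×ˢ
            (((↑) : X → OnePoint X) '' @Metric.ball X m.toPseudoMetricSpace y₀ (d x₀ y₀ / 3)),
          d x₀ y₀ / 3, ?_, ?_, by linarith, ?_⟩
        · exact (isOpen_image_coe.2 (@Metric.isOpen_ball X m.toPseudoMetricSpace _ _)).prod
            (isOpen_image_coe.2 (@Metric.isOpen_ball X m.toPseudoMetricSpace _ _))
        · exact ⟨mem_image_of_mem _
              (@Metric.mem_ball_self X m.toPseudoMetricSpace x₀ _ (by linarith)),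
            mem_image_of_mem _
              (@Metric.mem_ball_self X m.toPseudoMetricSpace y₀ _ (by linarith))⟩
        · rintro x y ⟨hx, hy⟩
          obtain ⟨x', hx', hxx⟩ := hx
          obtain ⟨y', hy', hyy⟩ := hy
          have hx2 : @dist X m.toDist x x₀ < d x₀ y₀ / 3 := by
            rw [← OnePoint.coe_eq_coe.1 hxx]
            exact (@Metric.mem_ball X m.toPseudoMetricSpace _ _ _).1 hx'
          have hy2 : @dist X m.toDist y y₀ < d x₀ y₀ / 3 := by
            rw [← OnePoint.coe_eq_coe.1 hyy]
            exact (@Metric.mem_ball X m.toPseudoMetricSpace _ _ _).1 hy'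
          have t1 : @dist X m.toDist x₀ y₀ ≤
              @dist X m.toDist x₀ x + @dist X m.toDist x y + @dist X m.toDist y y₀ :=
            @dist_triangle4 X m.toPseudoMetricSpace x₀ x y y₀
          have t2 : @dist X m.toDist x₀ x = @dist X m.toDist x x₀ :=
            @dist_comm X m.toPseudoMetricSpace x₀ x
          linarith
  choose W r hWopen hWmem hrpos hbound using key
  obtain ⟨t, ht⟩ := hB.elim_finite_subcover (fun q : B => W q.1 q.2)
    (fun q => hWopen q.1 q.2)
    (fun p hp => mem_iUnion.2 ⟨⟨p, hp⟩, hWmem p hp⟩)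
  by_cases hne : t.Nonempty
  · set c : ℝ := t.inf' hne fun q => r q.1 q.2 with hcdef
    have hcpos : 0 < c := by
      rw [hcdef, Finset.lt_inf'_iff]
      exact fun q _ => hrpos q.1 q.2
    refine ⟨c / 2, by linarith, ?_⟩
    intro x y hxy
    obtain ⟨g, hg⟩ := hexp' (↑x) (↑y) (fun h => hxy (OnePoint.coe_eq_coe.1 h))
    rw [onePointExt_coe, onePointExt_coe] at hg
    have hpB : ((↑(φ g x) : OnePoint X), (↑(φ g y) : OnePoint X)) ∈ B := le_of_lt hg
    obtain ⟨i, hit⟩ := mem_iUnion.1 (ht hpB)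
    obtain ⟨hit', hiW⟩ := mem_iUnion.1 hit
    have hr := hbound i.1 i.2 (φ g x) (φ g y) hiW
    have hcle : c ≤ r i.1 i.2 := Finset.inf'_le _ hit'
    refine ⟨g, ?_⟩
    show c / 2 < d (φ g x) (φ g y)
    linarith
  · refine ⟨1, one_pos, ?_⟩
    intro x y hxy
    obtain ⟨g, hg⟩ := hexp' (↑x) (↑y) (fun h => hxy (OnePoint.coe_eq_coe.1 h))
    rw [onePointExt_coe, onePointExt_coe] at hg
    have hpB : ((↑(φ g x) : OnePoint X), (↑(φ g y) : OnePoint X)) ∈ B := le_of_lt hg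
    obtain ⟨i, hit⟩ := mem_iUnion.1 (ht hpB)
    obtain ⟨hit', -⟩ := mem_iUnion.1 hit
    exact absurd ⟨i, hit'⟩ hne

/-- For an action of a group `G` on a locally compact σ-compact metrizable space `X`,
metric-independent expansiveness of `φ` is equivalent to the extension `φ'` to the
one-point compactification (fixing `∞`) being expansive with respect to some
compatible metric on `X'`, and equivalently with respect to every compatible metric
on `X'`. -/
theorem mie_iff_onePoint_expansive {G X : Type*} [Group G] [TopologicalSpace X]
    [TopologicalSpace.MetrizableSpace X] [LocallyCompactSpace X] [SigmaCompactSpace X]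
    (φ : G → X → X) (hone : ∀ x : X, φ 1 x = x)
    (hmul : ∀ (g h : G) (x : X), φ (g * h) x = φ g (φ h x)) :
    (MIE φ ↔
      ∃ m : MetricSpace (OnePoint X),
        m.toUniformSpace.toTopologicalSpace = (inferInstance : TopologicalSpace (OnePoint X)) ∧
        ExpansiveWith (onePointExt φ) (fun a b => @dist (OnePoint X) m.toDist a b)) ∧
    (MIE φ ↔ MIE (onePointExt φ)) := by
  have hmet := metrizable_onePoint (X := X)
  constructor
  · constructor
    · intro hMIE
      obtain ⟨m', hm'⟩ := (⟨@metrizableSpaceMetric (OnePoint X) _ hmet, rfl⟩ : ∃ m : MetricSpace (OnePoint X),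
        m.toUniformSpace.toTopologicalSpace = (inferInstance : TopologicalSpace (OnePoint X)))
      exact ⟨m', hm', mie_to_onePoint φ hone hMIE m' hm'⟩
    · rintro ⟨m', hm', hEx⟩
      exact onePoint_to_mie φ m' hm' hEx
  · constructor
    · intro hMIE m' hm'
      exact mie_to_onePoint φ hone hMIE m' hm'
    · intro h
      obtain ⟨m', hm'⟩ := (⟨@metrizableSpaceMetric (OnePoint X) _ hmet, rfl⟩ : ∃ m : MetricSpace (OnePoint X),
        m.toUniformSpace.toTopologicalSpace = (inferInstance : TopologicalSpace (OnePoint X)))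
      exact onePoint_to_mie φ m' hm' (h m' hm')
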